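/- (Fixed trace generating function.) For all positive integers a, b, c and every partition λ ∈ P(min(a,b), c), as polynomials in q and t: s_λ(q, q², ..., q^a) · s_λ(t, tq, ..., tq^{b−1}) = Σ_π q^{|π|} t^{tr(π)}, where the sum runs over all plane partitions π ∈ PP(a,b,c) whose diagonal vector Tr(π) := (π_{1,1}, π_{2,2}, ..., π_{d,d}) of nonzero diagonal entries equals λ. -/
import Mathlib


attribute [local instance] Classical.propDecidable

noncomputable section

/-- A plane partition with diagram inside the box `[a]×[b]×[c]`, recorded by its
matrix of heights `π i j` (0-indexed), with weakly decreasing rows and columns. -/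
def IsPP (a b c : ℕ) (π : Fin a → Fin b → Fin (c+1)) : Prop :=
  (∀ (i i' : Fin a) (j : Fin b), i ≤ i' → π i' j ≤ π i j) ∧
  (∀ (i : Fin a) (j j' : Fin b), j ≤ j' → π i j' ≤ π i j)

/-- The entry `π_{i,j}` (1-based indices), zero outside the box. -/
def pent {a b c : ℕ} (π : Fin a → Fin b → Fin (c+1)) (i j : ℕ) : ℕ :=
  if h : 1 ≤ i ∧ i ≤ a ∧ 1 ≤ j ∧ j ≤ b then
    (π ⟨i - 1, by omega⟩ ⟨j - 1, by omega⟩ : ℕ) else 0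

/-- The volume `|π| = Σ_{i,j} π_{i,j}`. -/
def ppVol {a b c : ℕ} (π : Fin a → Fin b → Fin (c+1)) : ℕ :=
  ∑ i : Fin a, ∑ j : Fin b, (π i j : ℕ)

/-- The trace `tr(π) = Σ_i π_{i,i}`. -/
def ppTr {a b c : ℕ} (π : Fin a → Fin b → Fin (c+1)) : ℕ :=
  ∑ i ∈ Finset.Icc 1 (min a b), pent π i i

/-- The set of corners of `π`: the triples `(i,j,k) ∈ D(π)` (1-based, so
`1 ≤ k ≤ π_{i,j}`) with `(i+1,j,k) ∉ D(π)` and `(i,j+1,k) ∉ D(π)`. -/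
def ppCor {a b c : ℕ} (π : Fin a → Fin b → Fin (c+1)) : Finset (ℕ × ℕ × ℕ) :=
  (Finset.Icc 1 a ×ˢ Finset.Icc 1 b ×ˢ Finset.Icc 1 c).filter
    (fun p => p.2.2 ≤ pent π p.1 p.2.1 ∧ pent π (p.1 + 1) p.2.1 < p.2.2 ∧
      pent π p.1 (p.2.1 + 1) < p.2.2)

/-- The corner-hook volume `|π|_{ch} = Σ_{(i,j,k) ∈ Cor(π)} (i+j-1)`. -/
def ppChVol {a b c : ℕ} (π : Fin a → Fin b → Fin (c+1)) : ℕ :=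
  ∑ p ∈ ppCor π, (p.1 + p.2.1 - 1)

/-- The finite set `PP(a,b,c)` of plane partitions with diagram in `[a]×[b]×[c]`. -/
def ppBox (a b c : ℕ) : Finset (Fin a → Fin b → Fin (c+1)) :=
  Finset.univ.filter (IsPP a b c)

/-- A column-strict plane partition of shape `μ` with entries in `{1,…,n}`
(the entry of the cell `c` is `T c + 1`): rows weakly decreasing, columns
strictly decreasing. -/
def IsCSPP (μ : YoungDiagram) (n : ℕ) (T : μ.cells → Fin n) : Prop :=
  (∀ c c' : μ.cells, (c : ℕ × ℕ).1 = (c' : ℕ × ℕ).1 → (c : ℕ × ℕ).2 ≤ (c' : ℕ × ℕ).2 →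
      T c' ≤ T c) ∧
  (∀ c c' : μ.cells, (c : ℕ × ℕ).2 = (c' : ℕ × ℕ).2 → (c : ℕ × ℕ).1 < (c' : ℕ × ℕ).1 →
      T c' < T c)

/-- The Schur polynomial `s_μ(x_1,…,x_n)`, as the generating function of
column-strict plane partitions of shape `μ` with entries in `{1,…,n}`. -/
def schur {R : Type*} [CommSemiring R] (n : ℕ) (μ : YoungDiagram) (x : ℕ → R) : R :=
  ∑ T ∈ Finset.univ.filter (IsCSPP μ n), ∏ c : μ.cells, x ((T c : ℕ) + 1)





/-- count of `x < N` with `t < f x`. -/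
def cnt (N : ℕ) (f : ℕ → ℕ) (t : ℕ) : ℕ :=
  ((Finset.range N).filter fun x => t < f x).card

lemma cnt_le (N : ℕ) (f : ℕ → ℕ) (t : ℕ) : cnt N f t ≤ N := by
  classical
  exact le_trans (Finset.card_filter_le _ _) (by simp)

lemma cnt_imp_le {N : ℕ} {f g : ℕ → ℕ} {t t' : ℕ}
    (h : ∀ x, x < N → t < f x → t' < g x) : cnt N f t ≤ cnt N g t' := by
  classical
  apply Finset.card_le_card
  intro x hx
  simp only [Finset.mem_filter, Finset.mem_range] at hx ⊢
  exact ⟨hx.1, h x hx.1 hx.2⟩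

lemma cnt_anti {N : ℕ} {f : ℕ → ℕ} {t t' : ℕ} (h : t ≤ t') : cnt N f t' ≤ cnt N f t :=
  cnt_imp_le fun x _ hx => lt_of_le_of_lt h hx

lemma cnt_eq_zero {N : ℕ} {f : ℕ → ℕ} {t : ℕ} (h : ∀ x, x < N → f x ≤ t) :
    cnt N f t = 0 := by
  classical
  simp only [cnt, Finset.card_eq_zero, Finset.filter_eq_empty_iff, Finset.mem_range]
  intro x hx
  exact not_lt.2 (h x hx)

lemma card_range_filter_lt (K v : ℕ) :
    ((Finset.range K).filter fun x => x < v).card = min v K := by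
  classical
  have : ((Finset.range K).filter fun x => x < v) = Finset.range (min v K) := by
    ext x; simp only [Finset.mem_filter, Finset.mem_range]; omega
  rw [this, Finset.card_range]

/-- Key conjugation lemma: for antitone `f`, `m < cnt N f t ↔ t < f m` (when `m < N`). -/
lemma lt_cnt_iff {N : ℕ} {f : ℕ → ℕ} (hf : ∀ x y, x ≤ y → f y ≤ f x) {m t : ℕ}
    (hm : m < N) : m < cnt N f t ↔ t < f m := by
  classical
  constructor
  · intro h
    rw [cnt] at h
    by_contra hc
    push_neg at hc
    have hsub : ((Finset.range N).filter fun x => t < f x) ⊆ Finset.range m := by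
      intro x hx
      simp only [Finset.mem_filter, Finset.mem_range] at hx ⊢
      by_contra hxm
      push_neg at hxm
      exact absurd (lt_of_lt_of_le hx.2 (hf m x hxm)) (not_lt.2 hc)
    have := Finset.card_le_card hsub
    simp only [Finset.card_range] at this
    omega
  · intro h
    rw [cnt]
    have hsub : Finset.range (m+1) ⊆ (Finset.range N).filter fun x => t < f x := by
      intro x hx
      simp only [Finset.mem_range] at hx
      simp only [Finset.mem_filter, Finset.mem_range]
      exact ⟨by omega, lt_of_lt_of_le h (hf x m (by omega))⟩
    have := Finset.card_le_card hsub
    simp only [Finset.card_range] at this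
    omega

/-- Double conjugation recovers an antitone function. -/
lemma cnt_cnt {N M : ℕ} {f : ℕ → ℕ} (hf : ∀ x y, x ≤ y → f y ≤ f x) {t : ℕ}
    (ht : t < N) (hM : f t ≤ M) : cnt M (cnt N f) t = f t := by
  classical
  have : ((Finset.range M).filter fun d => t < cnt N f d)
      = (Finset.range M).filter fun d => d < f t := by
    apply Finset.filter_congr
    intro d _
    have := lt_cnt_iff hf (m := t) (t := d) ht
    simp only [this]
  rw [cnt, this, card_range_filter_lt]
  exact min_eq_left hM

lemma sum_cnt {K N : ℕ} (f : ℕ → ℕ) :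
    ∑ t ∈ Finset.range K, cnt N f t = ∑ x ∈ Finset.range N, min (f x) K := by
  classical
  simp only [cnt, Finset.card_filter]
  rw [Finset.sum_comm]
  congr 1
  ext x
  have : ∑ t ∈ Finset.range K, (if t < f x then 1 else 0)
      = ((Finset.range K).filter fun t => t < f x).card := by
    rw [Finset.card_filter]
  rw [this, card_range_filter_lt]
section Layer2

variable {n cb : ℕ} (μ : YoungDiagram)

/-- The total entry function of a tableau: entry `T+1` on cells of `μ`, `0` outside. -/
def entf {n : ℕ} (μ : YoungDiagram) (T : μ.cells → Fin n) : ℕ → ℕ → ℕ :=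
  fun i k => if h : (i, k) ∈ μ then (T ⟨(i, k), (YoungDiagram.mem_cells _).2 h⟩ : ℕ) + 1 else 0

variable {μ}

lemma entf_pos_iff {T : μ.cells → Fin n} {i k : ℕ} :
    0 < entf μ T i k ↔ (i, k) ∈ μ := by
  unfold entf
  split_ifs with h <;> simp [h]

lemma entf_anti {T : μ.cells → Fin n} (hT : IsCSPP μ n T) {i k k' : ℕ} (h : k ≤ k') :
    entf μ T i k' ≤ entf μ T i k := by
  unfold entf
  split_ifs with h1 h2
  · have := hT.1 ⟨(i,k), (YoungDiagram.mem_cells _).2 h2⟩ ⟨(i,k'), (YoungDiagram.mem_cells _).2 h1⟩ rfl h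
    simpa using this
  · exact absurd (μ.up_left_mem le_rfl h h1) h2
  all_goals omega

lemma entf_strict {T : μ.cells → Fin n} (hT : IsCSPP μ n T) {i i' k : ℕ} (h : i ≤ i')
    (hne : entf μ T i' k ≠ 0) : entf μ T i' k + (i' - i) ≤ entf μ T i k := by
  obtain ⟨e, rfl⟩ := Nat.exists_eq_add_of_le h
  induction e with
  | zero => simp
  | succ e ih =>
      have hmem : (i + (e+1), k) ∈ μ := by
        by_contra hc
        exact hne (by unfold entf; simp [hc])
      have hmem' : (i + e, k) ∈ μ := μ.up_left_mem (by omega) le_rfl hmem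
      have hstep := hT.2 ⟨(i+e,k), (YoungDiagram.mem_cells _).2 hmem'⟩
        ⟨(i+(e+1),k), (YoungDiagram.mem_cells _).2 hmem⟩ rfl (by simp)
      have h1 : entf μ T (i + (e+1)) k + 1 ≤ entf μ T (i+e) k := by
        unfold entf
        simp only [hmem, hmem', dif_pos]
        omega
      have h2 : entf μ T (i+e) k ≠ 0 := by
        unfold entf
        simp [hmem']
      have := ih (by omega) h2
      omega

lemma entf_le {T : μ.cells → Fin n} (hT : IsCSPP μ n T) (i k : ℕ) :
    entf μ T i k ≤ n - i := by
  by_cases hne : entf μ T i k = 0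
  · omega
  · have h0 := entf_strict hT (Nat.zero_le i) hne
    have hb : entf μ T 0 k ≤ n := by
      unfold entf
      split_ifs with h
      · exact (T _).2
      · omega
    omega

/-- Axioms of a "diagonal slice system" of a plane partition with diagonal `μ`. -/
structure SliceOK (μ : YoungDiagram) (cb n : ℕ) (s : ℕ → ℕ → ℕ) : Prop where
  anti : ∀ i ⦃d d'⦄, d ≤ d' → s i d' ≤ s i d
  step : ∀ i d, s (i+1) d ≤ s i (d+1)
  diagle : ∀ i d, s (i+d) 0 ≤ s i d
  le_c : ∀ i d, s i d ≤ cb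
  zero : ∀ i d, n ≤ i + d → s i d = 0
  diag : ∀ i, s i 0 = μ.rowLen i

lemma SliceOK.step' {s : ℕ → ℕ → ℕ} (hs : SliceOK μ cb n s) (e : ℕ) :
    ∀ i d, s (i + e) d ≤ s i (d + e) := by
  induction e with
  | zero => intro i d; simp
  | succ e ih =>
      intro i d
      have h1 : s (i + (e+1)) d ≤ s (i + e) (d + 1) := hs.step (i + e) d
      exact le_trans h1 (le_trans (ih i (d+1)) (hs.anti i (by omega)))

/-- Slices of the plane partition built from a tableau (conjugates of entry rows). -/
def sliceOf (cb : ℕ) (ent : ℕ → ℕ → ℕ) : ℕ → ℕ → ℕ := fun i d => cnt cb (ent i) d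

/-- Entry function recovered from a slice system (conjugates of slices). -/
def entOf (n : ℕ) (s : ℕ → ℕ → ℕ) : ℕ → ℕ → ℕ := fun i k => cnt (n - i) (s i) k

lemma sliceOK_sliceOf {T : μ.cells → Fin n} (hT : IsCSPP μ n T) (hc : μ.rowLen 0 ≤ cb) :
    SliceOK μ cb n (sliceOf cb (entf μ T)) where
  anti i d d' h := cnt_anti h
  step i d := cnt_imp_le fun k _ hk => by
    have hne : entf μ T (i+1) k ≠ 0 := by omega
    have := entf_strict hT (i := i) (by omega) hne
    omega
  diagle i d := cnt_imp_le fun k _ hk => by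
    have hne : entf μ T (i+d) k ≠ 0 := by omega
    have := entf_strict hT (i := i) (by omega) hne
    omega
  le_c i d := cnt_le _ _ _
  zero i d h := cnt_eq_zero fun k _ => by
    have := entf_le hT i k
    omega
  diag i := by
    have heq : ((Finset.range cb).filter fun k => 0 < entf μ T i k)
        = (Finset.range cb).filter fun k => k < μ.rowLen i := by
      apply Finset.filter_congr
      intro k _
      rw [entf_pos_iff, YoungDiagram.mem_iff_lt_rowLen]
    show ((Finset.range cb).filter fun k => 0 < entf μ T i k).card = μ.rowLen i
    rw [heq, card_range_filter_lt]
    have := μ.rowLen_anti 0 i (Nat.zero_le i)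
    omega

section Psi

variable {s : ℕ → ℕ → ℕ}

lemma entOf_pos (hs : SliceOK μ cb n s) (hcol : μ.colLen 0 ≤ n) {i k : ℕ}
    (h : (i, k) ∈ μ) : 0 < entOf n s i k := by
  have hi : i < n := lt_of_lt_of_le (YoungDiagram.mem_iff_lt_colLen.1 h)
    (le_trans (μ.colLen_anti 0 k (Nat.zero_le k)) hcol)
  have hk : k < s i 0 := by
    rw [hs.diag i]
    exact YoungDiagram.mem_iff_lt_rowLen.1 h
  exact (lt_cnt_iff (fun x y hxy => hs.anti i hxy) (by omega)).2 hk

lemma entOf_eq_zero (hs : SliceOK μ cb n s) {i k : ℕ} (h : (i, k) ∉ μ) :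
    entOf n s i k = 0 := by
  apply cnt_eq_zero
  intro d _
  have h1 : s i d ≤ s i 0 := hs.anti i (Nat.zero_le d)
  rw [hs.diag i] at h1
  have h2 : μ.rowLen i ≤ k := by
    by_contra hc
    exact h (YoungDiagram.mem_iff_lt_rowLen.2 (by omega))
  omega

lemma entOf_le (i k : ℕ) : entOf n s i k ≤ n - i := cnt_le _ _ _

/-- The tableau built from a slice system. -/
def tabOf (μ : YoungDiagram) (n : ℕ) (s : ℕ → ℕ → ℕ) (hn : 0 < n) : μ.cells → Fin n :=
  fun cell => ⟨entOf n s cell.1.1 cell.1.2 - 1, by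
    have := cnt_le (n - cell.1.1) (s cell.1.1) cell.1.2
    have h2 : entOf n s cell.1.1 cell.1.2 ≤ n - cell.1.1 := this
    omega⟩

lemma entf_tabOf (hs : SliceOK μ cb n s) (hcol : μ.colLen 0 ≤ n) (hn : 0 < n) (i k : ℕ) :
    entf μ (tabOf μ n s hn) i k = entOf n s i k := by
  unfold entf
  split_ifs with h
  · show entOf n s i k - 1 + 1 = entOf n s i k
    have := entOf_pos hs hcol h
    omega
  · exact (entOf_eq_zero hs h).symm

lemma isCSPP_tabOf (hs : SliceOK μ cb n s) (hcol : μ.colLen 0 ≤ n) (hn : 0 < n) :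
    IsCSPP μ n (tabOf μ n s hn) := by
  constructor
  · rintro ⟨⟨i,k⟩, hc⟩ ⟨⟨i',k'⟩, hc'⟩ h1 h2
    simp only at h1 h2
    subst h1
    show entOf n s i k' - 1 ≤ entOf n s i k - 1
    have := cnt_anti (N := n - i) (f := s i) h2
    exact Nat.sub_le_sub_right this 1
  · rintro ⟨⟨i,k⟩, hc⟩ ⟨⟨i',k'⟩, hc'⟩ h1 h2
    simp only at h1 h2
    subst h1
    rw [YoungDiagram.mem_cells] at hc hc'
    show entOf n s i' k - 1 < entOf n s i k - 1
    have hi' : i' < n := lt_of_lt_of_le (YoungDiagram.mem_iff_lt_colLen.1 hc')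
      (le_trans (μ.colLen_anti 0 k (Nat.zero_le k)) hcol)
    set e := i' - i with he
    have he1 : 1 ≤ e := by omega
    -- the filter for i contains range e and the shift of the filter for i'
    have hsub : Finset.range e ∪ (((Finset.range (n - i')).filter fun d => k < s i' d).image
        (fun d => d + e)) ⊆ (Finset.range (n - i)).filter fun d => k < s i d := by
      intro d hd
      simp only [Finset.mem_union, Finset.mem_image, Finset.mem_filter, Finset.mem_range] at hd ⊢
      rcases hd with hd | ⟨d', ⟨hd1, hd2⟩, rfl⟩
      · refine ⟨by omega, ?_⟩
        have h3 : s (i + d) 0 ≤ s i d := hs.diagle i d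
        rw [hs.diag (i + d)] at h3
        have h4 : μ.rowLen i' ≤ μ.rowLen (i + d) := μ.rowLen_anti _ _ (by omega)
        have h5 : k < μ.rowLen i' := YoungDiagram.mem_iff_lt_rowLen.1 hc'
        omega
      · refine ⟨by omega, ?_⟩
        have h3 : s (i + e) d' ≤ s i (d' + e) := hs.step' e i d'
        have h4 : i + e = i' := by omega
        rw [h4] at h3
        omega
    have hdisj : Disjoint (Finset.range e)
        (((Finset.range (n - i')).filter fun d => k < s i' d).image (fun d => d + e)) := by
      rw [Finset.disjoint_left]
      intro d hd hd'
      simp only [Finset.mem_range] at hd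
      simp only [Finset.mem_image] at hd'
      obtain ⟨d', _, rfl⟩ := hd'
      omega
    have hcard := Finset.card_le_card hsub
    rw [Finset.card_union_of_disjoint hdisj, Finset.card_range,
      Finset.card_image_of_injective _ (fun x y h => by omega)] at hcard
    have h1 : entOf n s i' k + e ≤ entOf n s i k := by
      have : ((Finset.range (n - i')).filter fun d => k < s i' d).card = entOf n s i' k := rfl
      have : ((Finset.range (n - i)).filter fun d => k < s i d).card = entOf n s i k := rfl
      omega
    have h2 : 0 < entOf n s i' k := entOf_pos hs hcol hc'
    omega

end Psi

/-- Round trip 1: recovering the entries from the slices. -/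
lemma entOf_sliceOf {T : μ.cells → Fin n} (hT : IsCSPP μ n T) {i k : ℕ} (hk : k < cb) :
    entOf n (sliceOf cb (entf μ T)) i k = entf μ T i k :=
  cnt_cnt (fun x y h => entf_anti hT h) hk (entf_le hT i k)

/-- Round trip 2: recovering the slices from the entries. -/
lemma sliceOf_entOf {s : ℕ → ℕ → ℕ} (hs : SliceOK μ cb n s) (i d : ℕ) :
    sliceOf cb (entOf n s) i d = s i d := by
  by_cases hd : d < n - i
  · exact cnt_cnt (fun x y h => hs.anti i h) hd (hs.le_c i d)
  · rw [hs.zero i d (by omega)]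
    exact cnt_eq_zero fun k _ => le_trans (entOf_le i k) (by omega)

end Layer2
section Layer3

variable {a b c : ℕ} {μ : YoungDiagram}

/-- `cnt` only depends on values on `range N`. -/
lemma cnt_congr {N t : ℕ} {f g : ℕ → ℕ} (h : ∀ x, x < N → f x = g x) :
    cnt N f t = cnt N g t := by
  unfold cnt
  congr 1
  apply Finset.filter_congr
  intro x hx
  rw [h x (Finset.mem_range.1 hx)]

/-- 0-indexed total entry function of a boxed matrix. -/
def p0 {a b c : ℕ} (π : Fin a → Fin b → Fin (c+1)) (i j : ℕ) : ℕ :=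
  if h : i < a ∧ j < b then (π ⟨i, h.1⟩ ⟨j, h.2⟩ : ℕ) else 0

lemma pent_succ (π : Fin a → Fin b → Fin (c+1)) (i j : ℕ) :
    pent π (i+1) (j+1) = p0 π i j := by
  unfold pent p0
  split_ifs with h1 h2 h2
  · rfl
  all_goals omega

lemma p0_le (π : Fin a → Fin b → Fin (c+1)) (i j : ℕ) : p0 π i j ≤ c := by
  unfold p0
  split_ifs with h
  · exact Nat.lt_succ_iff.1 (π ⟨i, h.1⟩ ⟨j, h.2⟩).2
  · omega

lemma p0_anti_left {π : Fin a → Fin b → Fin (c+1)} (hπ : IsPP a b c π) {i i' j : ℕ}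
    (h : i ≤ i') : p0 π i' j ≤ p0 π i j := by
  unfold p0
  split_ifs with h1 h2 h2
  · exact hπ.1 ⟨i, h2.1⟩ ⟨i', h1.1⟩ ⟨j, h1.2⟩ h
  · omega
  all_goals omega

lemma p0_anti_right {π : Fin a → Fin b → Fin (c+1)} (hπ : IsPP a b c π) {i j j' : ℕ}
    (h : j ≤ j') : p0 π i j' ≤ p0 π i j := by
  unfold p0
  split_ifs with h1 h2 h2
  · exact hπ.2 ⟨i, h1.1⟩ ⟨j, h2.2⟩ ⟨j', h1.2⟩ h
  · omega
  all_goals omega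

lemma rowLen_eq_zero {i : ℕ} (h : μ.colLen 0 ≤ i) : μ.rowLen i = 0 := by
  by_contra hc
  have : (i, 0) ∈ μ := YoungDiagram.mem_iff_lt_rowLen.2 (by omega)
  have := YoungDiagram.mem_iff_lt_colLen.1 this
  omega

/-- Row slices of a plane partition. -/
def rsl (π : Fin a → Fin b → Fin (c+1)) : ℕ → ℕ → ℕ := fun i d => p0 π i (i + d)

/-- Column slices of a plane partition. -/
def csl (π : Fin a → Fin b → Fin (c+1)) : ℕ → ℕ → ℕ := fun j d => p0 π (j + d) j

lemma sliceOK_rsl {π : Fin a → Fin b → Fin (c+1)} (hπ : IsPP a b c π)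
    (hdiag : ∀ i, i < min a b → p0 π i i = μ.rowLen i) (h1 : μ.colLen 0 ≤ min a b) :
    SliceOK μ c b (rsl π) where
  anti i d d' h := p0_anti_right hπ (by omega)
  step i d := by
    have h1 : i + 1 + d = i + (d + 1) := by omega
    unfold rsl
    rw [h1]
    exact p0_anti_left hπ (by omega)
  diagle i d := p0_anti_left hπ (by omega)
  le_c i d := p0_le π _ _
  zero i d h := by
    unfold rsl p0
    rw [dif_neg (by omega)]
  diag i := by
    show p0 π i (i + 0) = μ.rowLen i
    rw [Nat.add_zero]
    by_cases h : i < min a b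
    · exact hdiag i h
    · rw [rowLen_eq_zero (by omega)]
      unfold p0
      rw [dif_neg (by omega)]

lemma sliceOK_csl {π : Fin a → Fin b → Fin (c+1)} (hπ : IsPP a b c π)
    (hdiag : ∀ i, i < min a b → p0 π i i = μ.rowLen i) (h1 : μ.colLen 0 ≤ min a b) :
    SliceOK μ c a (csl π) where
  anti j d d' h := p0_anti_left hπ (by omega)
  step j d := by
    have h1 : j + 1 + d = j + (d + 1) := by omega
    unfold csl
    rw [h1]
    exact p0_anti_right hπ (by omega)
  diagle j d := p0_anti_right hπ (by omega)
  le_c j d := p0_le π _ _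
  zero j d h := by
    unfold csl p0
    rw [dif_neg (by omega)]
  diag j := by
    show p0 π (j + 0) j = μ.rowLen j
    rw [Nat.add_zero]
    by_cases h : j < min a b
    · exact hdiag j h
    · rw [rowLen_eq_zero (by omega)]
      unfold p0
      rw [dif_neg (by omega)]

/-- The map from a pair of tableaux to a plane partition. -/
def phi (μ : YoungDiagram) (a b c : ℕ) (T1 : μ.cells → Fin a) (T2 : μ.cells → Fin b) :
    Fin a → Fin b → Fin (c+1) :=
  fun i j =>
    if (i : ℕ) ≤ (j : ℕ) then
      ⟨sliceOf c (entf μ T2) i ((j : ℕ) - i),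
        Nat.lt_succ_of_le (cnt_le c (entf μ T2 i) ((j : ℕ) - i))⟩
    else
      ⟨sliceOf c (entf μ T1) j ((i : ℕ) - j),
        Nat.lt_succ_of_le (cnt_le c (entf μ T1 j) ((i : ℕ) - j))⟩

lemma p0_phi {T1 : μ.cells → Fin a} {T2 : μ.cells → Fin b} {i j : ℕ}
    (hi : i < a) (hj : j < b) :
    p0 (phi μ a b c T1 T2) i j = if i ≤ j then sliceOf c (entf μ T2) i (j - i)
      else sliceOf c (entf μ T1) j (i - j) := by
  unfold p0 phi
  rw [dif_pos ⟨hi, hj⟩]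
  split_ifs with h <;> rfl

lemma entf_eq_zero_of_ge {n : ℕ} {T : μ.cells → Fin n} {i k : ℕ} (h : μ.colLen 0 ≤ i) :
    entf μ T i k = 0 := by
  unfold entf
  rw [dif_neg]
  intro hc
  have := YoungDiagram.mem_iff_lt_colLen.1 hc
  have := μ.colLen_anti 0 k (Nat.zero_le k)
  omega

lemma rsl_phi {T1 : μ.cells → Fin a} {T2 : μ.cells → Fin b} (hT2 : IsCSPP μ b T2)
    (h1 : μ.colLen 0 ≤ min a b) (h2 : μ.rowLen 0 ≤ c) (i d : ℕ) :
    rsl (phi μ a b c T1 T2) i d = sliceOf c (entf μ T2) i d := by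
  by_cases hbox : i < a ∧ i + d < b
  · show p0 _ i (i + d) = _
    rw [p0_phi hbox.1 hbox.2, if_pos (by omega)]
    congr 1
    omega
  · have h0 : rsl (phi μ a b c T1 T2) i d = 0 := by
      unfold rsl p0
      rw [dif_neg hbox]
    rw [h0]
    by_cases hib : b ≤ i + d
    · exact ((sliceOK_sliceOf hT2 h2).zero i d hib).symm
    · have hia : a ≤ i := by omega
      symm
      apply cnt_eq_zero
      intro k _
      rw [entf_eq_zero_of_ge (le_trans (le_trans h1 (Nat.min_le_left a b)) hia)]
      exact Nat.zero_le d

lemma csl_phi {T1 : μ.cells → Fin a} {T2 : μ.cells → Fin b} (hT1 : IsCSPP μ a T1)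
    (hT2 : IsCSPP μ b T2)
    (h1 : μ.colLen 0 ≤ min a b) (h2 : μ.rowLen 0 ≤ c) (j d : ℕ) :
    csl (phi μ a b c T1 T2) j d = sliceOf c (entf μ T1) j d := by
  by_cases hbox : j + d < a ∧ j < b
  · show p0 _ (j + d) j = _
    rw [p0_phi hbox.1 hbox.2]
    by_cases hd : d = 0
    · subst hd
      rw [if_pos (by omega)]
      simp only [Nat.add_zero, Nat.sub_self]
      rw [(sliceOK_sliceOf hT2 h2).diag j, (sliceOK_sliceOf hT1 h2).diag j]
    · rw [if_neg (by omega)]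
      congr 1
      omega
  · have h0 : csl (phi μ a b c T1 T2) j d = 0 := by
      unfold csl p0
      rw [dif_neg hbox]
    rw [h0]
    by_cases hja : a ≤ j + d
    · exact ((sliceOK_sliceOf hT1 h2).zero j d hja).symm
    · have hjb : b ≤ j := by omega
      symm
      apply cnt_eq_zero
      intro k _
      rw [entf_eq_zero_of_ge (le_trans (le_trans h1 (Nat.min_le_right a b)) hjb)]
      exact Nat.zero_le d

lemma isPP_phi {T1 : μ.cells → Fin a} {T2 : μ.cells → Fin b}
    (hT1 : IsCSPP μ a T1) (hT2 : IsCSPP μ b T2) (h2 : μ.rowLen 0 ≤ c) :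
    IsPP a b c (phi μ a b c T1 T2) := by
  have hs1 := sliceOK_sliceOf hT1 h2
  have hs2 := sliceOK_sliceOf hT2 h2
  constructor
  · -- columns: i ≤ i' → π i' j ≤ π i j
    intro i i' j hii
    have hii' : (i : ℕ) ≤ (i' : ℕ) := hii
    show ((phi μ a b c T1 T2 i' j) : ℕ) ≤ phi μ a b c T1 T2 i j
    unfold phi
    split_ifs with hA hB hB
    · -- i' ≤ j, i ≤ j
      have h := hs2.step' ((i' : ℕ) - i) i ((j : ℕ) - i')
      have he1 : (i : ℕ) + ((i' : ℕ) - i) = i' := by omega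
      have he2 : (j : ℕ) - i' + ((i' : ℕ) - i) = (j : ℕ) - i := by omega
      rw [he1, he2] at h
      exact h
    · omega
    · -- i ≤ j < i'
      have hb1 : sliceOf c (entf μ T1) j ((i' : ℕ) - j) ≤ sliceOf c (entf μ T1) j 0 :=
        hs1.anti _ (Nat.zero_le _)
      rw [hs1.diag] at hb1
      have hb2 : sliceOf c (entf μ T2) ((i : ℕ) + ((j : ℕ) - i)) 0
          ≤ sliceOf c (entf μ T2) i ((j : ℕ) - i) := hs2.diagle _ _
      have he : (i : ℕ) + ((j : ℕ) - i) = j := by omega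
      rw [he, hs2.diag] at hb2
      show sliceOf c (entf μ T1) j ((i' : ℕ) - j) ≤ sliceOf c (entf μ T2) i ((j : ℕ) - i)
      omega
    · -- j < i ≤ i'
      exact hs1.anti _ (by omega)
  · -- rows: j ≤ j' → π i j' ≤ π i j
    intro i j j' hjj
    have hjj' : (j : ℕ) ≤ (j' : ℕ) := hjj
    show ((phi μ a b c T1 T2 i j') : ℕ) ≤ phi μ a b c T1 T2 i j
    unfold phi
    split_ifs with hA hB hB
    · exact hs2.anti _ (by omega)
    · -- j < i ≤ j'
      have hb1 : sliceOf c (entf μ T2) i ((j' : ℕ) - i) ≤ sliceOf c (entf μ T2) i 0 :=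
        hs2.anti _ (Nat.zero_le _)
      rw [hs2.diag] at hb1
      have hb2 : sliceOf c (entf μ T1) ((j : ℕ) + ((i : ℕ) - j)) 0
          ≤ sliceOf c (entf μ T1) j ((i : ℕ) - j) := hs1.diagle _ _
      have he : (j : ℕ) + ((i : ℕ) - j) = i := by omega
      rw [he, hs1.diag] at hb2
      show sliceOf c (entf μ T2) i ((j' : ℕ) - i) ≤ sliceOf c (entf μ T1) j ((i : ℕ) - j)
      omega
    · omega
    · -- j ≤ j' < i
      have h := hs1.step' ((j' : ℕ) - j) j ((i : ℕ) - j')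
      have he1 : (j : ℕ) + ((j' : ℕ) - j) = j' := by omega
      have he2 : (i : ℕ) - j' + ((j' : ℕ) - j) = (i : ℕ) - j := by omega
      rw [he1, he2] at h
      exact h

lemma diag_phi {T1 : μ.cells → Fin a} {T2 : μ.cells → Fin b} (hT2 : IsCSPP μ b T2)
    (h2 : μ.rowLen 0 ≤ c) {i : ℕ} (hi : i < min a b) :
    p0 (phi μ a b c T1 T2) i i = μ.rowLen i := by
  rw [p0_phi (by omega) (by omega), if_pos le_rfl, Nat.sub_self]
  exact (sliceOK_sliceOf hT2 h2).diag i

end Layer3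
section Layer4

variable {a b c : ℕ} {μ : YoungDiagram}

lemma entf_apply {n : ℕ} {T : μ.cells → Fin n} (cell : μ.cells) :
    entf μ T cell.1.1 cell.1.2 = (T cell : ℕ) + 1 := by
  unfold entf
  rw [dif_pos ((YoungDiagram.mem_cells _).1 cell.2)]

/-- Round trip: recover the second tableau from `phi`. -/
lemma psi2_phi {T1 : μ.cells → Fin a} {T2 : μ.cells → Fin b} (hT2 : IsCSPP μ b T2)
    (h1 : μ.colLen 0 ≤ min a b) (h2 : μ.rowLen 0 ≤ c) (hb : 0 < b) :
    tabOf μ b (rsl (phi μ a b c T1 T2)) hb = T2 := by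
  funext cell
  apply Fin.ext
  show entOf b (rsl (phi μ a b c T1 T2)) cell.1.1 cell.1.2 - 1 = (T2 cell : ℕ)
  have hmem : (cell.1.1, cell.1.2) ∈ μ := (YoungDiagram.mem_cells _).1 cell.2
  have hk : cell.1.2 < c := lt_of_lt_of_le (YoungDiagram.mem_iff_lt_rowLen.1 hmem)
    (le_trans (μ.rowLen_anti 0 _ (Nat.zero_le _)) h2)
  have e1 : entOf b (rsl (phi μ a b c T1 T2)) cell.1.1 cell.1.2
      = entOf b (sliceOf c (entf μ T2)) cell.1.1 cell.1.2 :=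
    cnt_congr fun x _ => rsl_phi hT2 h1 h2 cell.1.1 x
  rw [e1, entOf_sliceOf hT2 hk, entf_apply]
  omega

/-- Round trip: recover the first tableau from `phi`. -/
lemma psi1_phi {T1 : μ.cells → Fin a} {T2 : μ.cells → Fin b} (hT1 : IsCSPP μ a T1)
    (hT2 : IsCSPP μ b T2)
    (h1 : μ.colLen 0 ≤ min a b) (h2 : μ.rowLen 0 ≤ c) (ha : 0 < a) :
    tabOf μ a (csl (phi μ a b c T1 T2)) ha = T1 := by
  funext cell
  apply Fin.ext
  show entOf a (csl (phi μ a b c T1 T2)) cell.1.1 cell.1.2 - 1 = (T1 cell : ℕ)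
  have hmem : (cell.1.1, cell.1.2) ∈ μ := (YoungDiagram.mem_cells _).1 cell.2
  have hk : cell.1.2 < c := lt_of_lt_of_le (YoungDiagram.mem_iff_lt_rowLen.1 hmem)
    (le_trans (μ.rowLen_anti 0 _ (Nat.zero_le _)) h2)
  have e1 : entOf a (csl (phi μ a b c T1 T2)) cell.1.1 cell.1.2
      = entOf a (sliceOf c (entf μ T1)) cell.1.1 cell.1.2 :=
    cnt_congr fun x _ => csl_phi hT1 hT2 h1 h2 cell.1.1 x
  rw [e1, entOf_sliceOf hT1 hk, entf_apply]
  omega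

/-- Round trip: recover the plane partition from its two tableaux. -/
lemma phi_psi {π : Fin a → Fin b → Fin (c+1)} (hπ : IsPP a b c π)
    (hdiag : ∀ i, i < min a b → p0 π i i = μ.rowLen i)
    (h1 : μ.colLen 0 ≤ min a b) (ha : 0 < a) (hb : 0 < b) :
    phi μ a b c (tabOf μ a (csl π) ha) (tabOf μ b (rsl π) hb) = π := by
  have hsr := sliceOK_rsl (μ := μ) hπ hdiag h1
  have hsc := sliceOK_csl (μ := μ) hπ hdiag h1
  have hca : μ.colLen 0 ≤ a := le_trans h1 (Nat.min_le_left a b)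
  have hcb : μ.colLen 0 ≤ b := le_trans h1 (Nat.min_le_right a b)
  funext i j
  apply Fin.ext
  show ((phi μ a b c _ _ i j : ℕ)) = ((π i j : ℕ))
  unfold phi
  split_ifs with h
  · show sliceOf c (entf μ (tabOf μ b (rsl π) hb)) ↑i (↑j - ↑i) = ((π i j : ℕ))
    have e1 : sliceOf c (entf μ (tabOf μ b (rsl π) hb)) ↑i (↑j - ↑i)
        = sliceOf c (entOf b (rsl π)) ↑i (↑j - ↑i) :=
      cnt_congr fun k _ => entf_tabOf hsr hcb hb ↑i k
    rw [e1, sliceOf_entOf hsr]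
    show p0 π ↑i (↑i + (↑j - ↑i)) = _
    have he : (i : ℕ) + ((j : ℕ) - i) = j := by omega
    rw [he]
    unfold p0
    rw [dif_pos ⟨i.2, j.2⟩]
  · show sliceOf c (entf μ (tabOf μ a (csl π) ha)) ↑j (↑i - ↑j) = ((π i j : ℕ))
    have e1 : sliceOf c (entf μ (tabOf μ a (csl π) ha)) ↑j (↑i - ↑j)
        = sliceOf c (entOf a (csl π)) ↑j (↑i - ↑j) :=
      cnt_congr fun k _ => entf_tabOf hsc hca ha ↑j k
    rw [e1, sliceOf_entOf hsc]
    show p0 π (↑j + (↑i - ↑j)) ↑j = _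
    have he : (j : ℕ) + ((i : ℕ) - j) = i := by omega
    rw [he]
    unfold p0
    rw [dif_pos ⟨i.2, j.2⟩]

lemma sum_rowLen {M : ℕ} (h : μ.colLen 0 ≤ M) :
    ∑ i ∈ Finset.range M, μ.rowLen i = μ.cells.card := by
  have H : ∀ x ∈ μ.cells, Prod.fst x ∈ Finset.range M := by
    intro x hx
    rw [Finset.mem_range]
    have hm : (x.1, x.2) ∈ μ := (YoungDiagram.mem_cells _).1 hx
    have := YoungDiagram.mem_iff_lt_colLen.1 hm
    have := μ.colLen_anti 0 x.2 (Nat.zero_le _)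
    omega
  rw [Finset.card_eq_sum_card_fiberwise H]
  apply Finset.sum_congr rfl
  intro i _
  rw [YoungDiagram.rowLen_eq_card]
  rfl

lemma sum_entf {n M : ℕ} (T : μ.cells → Fin n) (hM : μ.colLen 0 ≤ M)
    (hc : μ.rowLen 0 ≤ c) :
    ∑ i ∈ Finset.range M, ∑ k ∈ Finset.range c, entf μ T i k
      = ∑ cell ∈ μ.cells.attach, ((T cell : ℕ) + 1) := by
  rw [← Finset.sum_product (f := fun p => entf μ T p.1 p.2)]
  have hsub : μ.cells ⊆ Finset.range M ×ˢ Finset.range c := by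
    intro x hx
    have hm : (x.1, x.2) ∈ μ := (YoungDiagram.mem_cells _).1 hx
    have hx1 := YoungDiagram.mem_iff_lt_colLen.1 hm
    have hx2 := YoungDiagram.mem_iff_lt_rowLen.1 hm
    have h3 := μ.colLen_anti 0 x.2 (Nat.zero_le _)
    have h4 := μ.rowLen_anti 0 x.1 (Nat.zero_le _)
    rw [Finset.mem_product, Finset.mem_range, Finset.mem_range]
    omega
  rw [← Finset.sum_subset hsub (fun x _ hnx => ?_)]
  · rw [← Finset.sum_attach μ.cells (fun p => entf μ T p.1 p.2)]
    apply Finset.sum_congr rfl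
    intro cell _
    exact entf_apply cell
  · unfold entf
    rw [dif_neg]
    intro hc
    exact hnx ((YoungDiagram.mem_cells _).2 hc)

lemma sum_shift {B o : ℕ} (f : ℕ → ℕ) :
    ∑ j ∈ (Finset.range B).filter (fun j => o ≤ j), f (j - o)
      = ∑ d ∈ Finset.range (B - o), f d := by
  apply Finset.sum_nbij' (i := fun j => j - o) (j := fun d => o + d)
  · intro x hx
    simp only [Finset.mem_filter, Finset.mem_range] at hx ⊢
    omega
  · intro x hx
    simp only [Finset.mem_filter, Finset.mem_range] at hx ⊢
    omega
  · intro x hx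
    simp only [Finset.mem_filter, Finset.mem_range] at hx
    omega
  · intro x hx
    simp only [Finset.mem_range] at hx
    omega
  · intro x _
    rfl

lemma ppVol_eq (π : Fin a → Fin b → Fin (c+1)) :
    ppVol π = ∑ i ∈ Finset.range a, ∑ j ∈ Finset.range b, p0 π i j := by
  unfold ppVol
  rw [← Fin.sum_univ_eq_sum_range (fun i => ∑ j ∈ Finset.range b, p0 π i j) a]
  apply Finset.sum_congr rfl
  intro i _
  rw [← Fin.sum_univ_eq_sum_range (fun j => p0 π ↑i j) b]
  apply Finset.sum_congr rfl
  intro j _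
  show ((π i j : ℕ)) = p0 π ↑i ↑j
  unfold p0
  rw [dif_pos ⟨i.2, j.2⟩]

lemma ppVol_phi {T1 : μ.cells → Fin a} {T2 : μ.cells → Fin b}
    (hT1 : IsCSPP μ a T1) (hT2 : IsCSPP μ b T2)
    (h1 : μ.colLen 0 ≤ min a b) (h2 : μ.rowLen 0 ≤ c) :
    ppVol (phi μ a b c T1 T2) + μ.cells.card
      = (∑ cell ∈ μ.cells.attach, ((T1 cell : ℕ) + 1))
        + ∑ cell ∈ μ.cells.attach, ((T2 cell : ℕ) + 1) := by
  have hca : μ.colLen 0 ≤ a := le_trans h1 (Nat.min_le_left a b)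
  have hcb : μ.colLen 0 ≤ b := le_trans h1 (Nat.min_le_right a b)
  rw [ppVol_eq]
  have step1 : ∑ i ∈ Finset.range a, ∑ j ∈ Finset.range b, p0 (phi μ a b c T1 T2) i j
      = (∑ i ∈ Finset.range a, ∑ j ∈ (Finset.range b).filter (fun j => i ≤ j),
            sliceOf c (entf μ T2) i (j - i))
        + ∑ i ∈ Finset.range a, ∑ j ∈ (Finset.range b).filter (fun j => ¬ i ≤ j),
            sliceOf c (entf μ T1) j (i - j) := by
    rw [← Finset.sum_add_distrib]
    apply Finset.sum_congr rfl
    intro i hi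
    rw [← Finset.sum_filter_add_sum_filter_not (Finset.range b) (fun j => i ≤ j)
      (fun j => p0 (phi μ a b c T1 T2) i j)]
    congr 1
    · apply Finset.sum_congr rfl
      intro j hj
      simp only [Finset.mem_filter, Finset.mem_range] at hj
      rw [p0_phi (Finset.mem_range.1 hi) hj.1, if_pos hj.2]
    · apply Finset.sum_congr rfl
      intro j hj
      simp only [Finset.mem_filter, Finset.mem_range] at hj
      rw [p0_phi (Finset.mem_range.1 hi) hj.1, if_neg hj.2]
  rw [step1]
  have hupper : ∀ i : ℕ, ∑ j ∈ (Finset.range b).filter (fun j => i ≤ j),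
      sliceOf c (entf μ T2) i (j - i) = ∑ k ∈ Finset.range c, entf μ T2 i k := by
    intro i
    rw [sum_shift (f := fun d => sliceOf c (entf μ T2) i d)]
    show ∑ d ∈ Finset.range (b - i), cnt c (entf μ T2 i) d = _
    rw [sum_cnt]
    apply Finset.sum_congr rfl
    intro k _
    exact min_eq_left (entf_le hT2 i k)
  have hswap : ∑ i ∈ Finset.range a, ∑ j ∈ (Finset.range b).filter (fun j => ¬ i ≤ j),
        sliceOf c (entf μ T1) j (i - j)
      = ∑ j ∈ Finset.range b, ∑ i ∈ (Finset.range a).filter (fun i => ¬ i ≤ j),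
        sliceOf c (entf μ T1) j (i - j) := by
    simp only [Finset.sum_filter]
    exact Finset.sum_comm
  have hlowerj : ∀ j : ℕ, (∑ i ∈ (Finset.range a).filter (fun i => ¬ i ≤ j),
        sliceOf c (entf μ T1) j (i - j)) + μ.rowLen j
      = ∑ k ∈ Finset.range c, entf μ T1 j k := by
    intro j
    have hfil : (Finset.range a).filter (fun i => ¬ i ≤ j)
        = (Finset.range a).filter (fun i => j + 1 ≤ i) := by
      apply Finset.filter_congr
      intro x _
      constructor <;> (intro; omega)
    rw [hfil]
    have hcongr : ∑ i ∈ (Finset.range a).filter (fun i => j + 1 ≤ i),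
          sliceOf c (entf μ T1) j (i - j)
        = ∑ i ∈ (Finset.range a).filter (fun i => j + 1 ≤ i),
          (fun d => sliceOf c (entf μ T1) j (d + 1)) (i - (j + 1)) := by
      apply Finset.sum_congr rfl
      intro i hi
      simp only [Finset.mem_filter, Finset.mem_range] at hi
      show sliceOf c (entf μ T1) j (i - j) = sliceOf c (entf μ T1) j (i - (j+1) + 1)
      congr 1
      omega
    rw [hcongr, sum_shift (o := j + 1) (f := fun d => sliceOf c (entf μ T1) j (d + 1))]
    have hdiag : sliceOf c (entf μ T1) j 0 = μ.rowLen j := (sliceOK_sliceOf hT1 h2).diag j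
    by_cases hja : j < a
    · have hs : ∑ d ∈ Finset.range ((a - (j+1)) + 1), sliceOf c (entf μ T1) j d
          = (∑ d ∈ Finset.range (a - (j+1)), sliceOf c (entf μ T1) j (d+1))
            + sliceOf c (entf μ T1) j 0 := Finset.sum_range_succ' _ _
      have he : a - (j+1) + 1 = a - j := by omega
      rw [he] at hs
      rw [← hdiag, ← hs]
      show ∑ d ∈ Finset.range (a - j), cnt c (entf μ T1 j) d = _
      rw [sum_cnt]
      apply Finset.sum_congr rfl
      intro k _
      exact min_eq_left (entf_le hT1 j k)
    · have h0 : a - (j+1) = 0 := by omega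
      rw [h0]
      simp only [Finset.range_zero, Finset.sum_empty, Nat.zero_add]
      rw [rowLen_eq_zero (by omega)]
      symm
      apply Finset.sum_eq_zero
      intro k _
      exact entf_eq_zero_of_ge (by omega)
  have hlower : (∑ j ∈ Finset.range b, ∑ i ∈ (Finset.range a).filter (fun i => ¬ i ≤ j),
        sliceOf c (entf μ T1) j (i - j)) + μ.cells.card
      = ∑ j ∈ Finset.range b, ∑ k ∈ Finset.range c, entf μ T1 j k := by
    rw [← sum_rowLen hcb, ← Finset.sum_add_distrib]
    exact Finset.sum_congr rfl fun j _ => hlowerj j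
  calc (∑ i ∈ Finset.range a, ∑ j ∈ (Finset.range b).filter (fun j => i ≤ j),
            sliceOf c (entf μ T2) i (j - i))
        + (∑ i ∈ Finset.range a, ∑ j ∈ (Finset.range b).filter (fun j => ¬ i ≤ j),
            sliceOf c (entf μ T1) j (i - j)) + μ.cells.card
      = (∑ i ∈ Finset.range a, ∑ k ∈ Finset.range c, entf μ T2 i k)
        + ((∑ j ∈ Finset.range b, ∑ i ∈ (Finset.range a).filter (fun i => ¬ i ≤ j),
            sliceOf c (entf μ T1) j (i - j)) + μ.cells.card) := by
        rw [hswap]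
        rw [Finset.sum_congr rfl fun i _ => hupper i]
        omega
    _ = (∑ cell ∈ μ.cells.attach, ((T1 cell : ℕ) + 1))
        + ∑ cell ∈ μ.cells.attach, ((T2 cell : ℕ) + 1) := by
        rw [hlower, sum_entf T1 hcb h2, sum_entf T2 hca h2]
        omega

lemma ppTr_phi {T1 : μ.cells → Fin a} {T2 : μ.cells → Fin b} (hT2 : IsCSPP μ b T2)
    (h1 : μ.colLen 0 ≤ min a b) (h2 : μ.rowLen 0 ≤ c) :
    ppTr (phi μ a b c T1 T2) = μ.cells.card := by
  unfold ppTr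
  rw [← Finset.Ico_add_one_right_eq_Icc, Finset.sum_Ico_eq_sum_range]
  have hmm : min a b + 1 - 1 = min a b := rfl
  rw [hmm, ← sum_rowLen h1]
  apply Finset.sum_congr rfl
  intro i hi
  rw [Finset.mem_range] at hi
  have : 1 + i = i + 1 := by omega
  rw [this, pent_succ]
  exact diag_phi hT2 h2 hi

end Layer4
/-- **Fixed trace generating function.** For all positive integers `a, b, c` and
every partition `μ ∈ P(min(a,b), c)`, as polynomials in `q = X 0` and `t = X 1`:
`s_μ(q,…,q^a) s_μ(t,tq,…,tq^{b-1}) = Σ_{π ∈ PP(a,b,c), Tr(π) = μ} q^{|π|} t^{tr(π)}`,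
where `Tr(π) = μ` means that `π_{i,i} = μ_i` for all `i`. -/
theorem statement10 (a b c : ℕ) (ha : 0 < a) (hb : 0 < b) (hc : 0 < c)
    (μ : YoungDiagram) (h1 : μ.colLen 0 ≤ min a b) (h2 : μ.rowLen 0 ≤ c) :
    schur a μ (fun i => (MvPolynomial.X 0 : MvPolynomial (Fin 2) ℤ) ^ i) *
        schur b μ (fun j => MvPolynomial.X 1 * MvPolynomial.X 0 ^ (j - 1))
      = ∑ π ∈ (ppBox a b c).filter
            (fun π => ∀ i : ℕ, 1 ≤ i → i ≤ min a b → pent π i i = μ.rowLen (i - 1)),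
          (MvPolynomial.X 0 : MvPolynomial (Fin 2) ℤ) ^ ppVol π *
            MvPolynomial.X 1 ^ ppTr π := by
  classical
  have hca : μ.colLen 0 ≤ a := le_trans h1 (Nat.min_le_left a b)
  have hcb : μ.colLen 0 ≤ b := le_trans h1 (Nat.min_le_right a b)
  unfold schur
  rw [Finset.sum_mul_sum]
  rw [← Finset.sum_product'
    (f := fun (T1 : μ.cells → Fin a) (T2 : μ.cells → Fin b) =>
      (∏ cell : μ.cells, (MvPolynomial.X 0 : MvPolynomial (Fin 2) ℤ) ^ ((T1 cell : ℕ) + 1)) *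
      ∏ cell : μ.cells, (MvPolynomial.X 1 : MvPolynomial (Fin 2) ℤ) *
        MvPolynomial.X 0 ^ ((T2 cell : ℕ) + 1 - 1))]
  apply Finset.sum_nbij' (i := fun p => phi μ a b c p.1 p.2)
    (j := fun π => (tabOf μ a (csl π) ha, tabOf μ b (rsl π) hb))
  · rintro ⟨T1, T2⟩ hp
    rw [Finset.mem_product, Finset.mem_filter, Finset.mem_filter] at hp
    obtain ⟨⟨-, hT1⟩, ⟨-, hT2⟩⟩ := hp
    rw [Finset.mem_filter]
    refine ⟨?_, ?_⟩
    · rw [ppBox, Finset.mem_filter]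
      exact ⟨Finset.mem_univ _, isPP_phi hT1 hT2 h2⟩
    · intro i hi1 hi2
      obtain ⟨e, rfl⟩ : ∃ e, i = e + 1 := ⟨i - 1, by omega⟩
      rw [pent_succ, diag_phi hT2 h2 (by omega)]
      congr 1
  · intro π hπm
    rw [Finset.mem_filter] at hπm
    obtain ⟨hbox, hdiagm⟩ := hπm
    rw [ppBox, Finset.mem_filter] at hbox
    have hπ : IsPP a b c π := hbox.2
    have hdiag : ∀ i, i < min a b → p0 π i i = μ.rowLen i := by
      intro i hi
      have := hdiagm (i+1) (by omega) (by omega)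
      rwa [pent_succ] at this
    rw [Finset.mem_product, Finset.mem_filter, Finset.mem_filter]
    exact ⟨⟨Finset.mem_univ _, isCSPP_tabOf (sliceOK_csl hπ hdiag h1) hca ha⟩,
           ⟨Finset.mem_univ _, isCSPP_tabOf (sliceOK_rsl hπ hdiag h1) hcb hb⟩⟩
  · rintro ⟨T1, T2⟩ hp
    rw [Finset.mem_product, Finset.mem_filter, Finset.mem_filter] at hp
    obtain ⟨⟨-, hT1⟩, ⟨-, hT2⟩⟩ := hp
    have e1 := psi1_phi hT1 hT2 h1 h2 ha
    have e2 := psi2_phi (T1 := T1) hT2 h1 h2 hb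
    simp only [Prod.mk.injEq]
    exact ⟨e1, e2⟩
  · intro π hπm
    rw [Finset.mem_filter] at hπm
    obtain ⟨hbox, hdiagm⟩ := hπm
    rw [ppBox, Finset.mem_filter] at hbox
    have hπ : IsPP a b c π := hbox.2
    have hdiag : ∀ i, i < min a b → p0 π i i = μ.rowLen i := by
      intro i hi
      have := hdiagm (i+1) (by omega) (by omega)
      rwa [pent_succ] at this
    exact phi_psi hπ hdiag h1 ha hb
  · rintro ⟨T1, T2⟩ hp
    rw [Finset.mem_product, Finset.mem_filter, Finset.mem_filter] at hp
    obtain ⟨⟨-, hT1⟩, ⟨-, hT2⟩⟩ := hp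
    dsimp only at hT1 hT2 ⊢
    have hN : (Finset.univ : Finset μ.cells).card = μ.cells.card := by
      rw [Finset.univ_eq_attach]; exact Finset.card_attach
    rw [Finset.prod_pow_eq_pow_sum]
    have hp2 : (∏ cell : μ.cells, (MvPolynomial.X 1 : MvPolynomial (Fin 2) ℤ) *
          MvPolynomial.X 0 ^ ((T2 cell : ℕ) + 1 - 1))
        = MvPolynomial.X 1 ^ μ.cells.card *
          MvPolynomial.X 0 ^ ∑ cell : μ.cells, (T2 cell : ℕ) := by
      simp only [Nat.add_sub_cancel]
      rw [Finset.prod_mul_distrib, Finset.prod_const, Finset.prod_pow_eq_pow_sum, hN]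
    rw [hp2]
    rw [ppTr_phi hT2 h1 h2]
    have hvol := ppVol_phi hT1 hT2 h1 h2
    rw [← Finset.univ_eq_attach] at hvol
    have hsum2 : ∑ cell : μ.cells, ((T2 cell : ℕ) + 1)
        = (∑ cell : μ.cells, (T2 cell : ℕ)) + μ.cells.card := by
      rw [Finset.sum_add_distrib, Finset.sum_const, hN, smul_eq_mul, mul_one]
    have hexp : (∑ cell : μ.cells, ((T1 cell : ℕ) + 1))
        + (∑ cell : μ.cells, (T2 cell : ℕ)) = ppVol (phi μ a b c T1 T2) := by
      omega
    rw [← hexp, pow_add]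
    ring
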